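/- Let u ∈ C¹(ℝ) be 2π-periodic with amplitude V = max u − min u > 0, let v = u', and let x₀ be a point where v attains its maximum. Then 8πV·Λv(x₀) ≥ v(x₀)², where Λv(x₀) = (1/π) p.v. ∫_ℝ (v(x₀) − v(x₀+y))/y² dy. -/

import Mathlib

open Real Set Filter Topology MeasureTheory
open scoped Interval

lemma my_zpow2 (y : ℝ) : y^(-2:ℤ) = (y^2)⁻¹ := by
  rw [zpow_neg, zpow_two, sq]

lemma my_zpow3 (y : ℝ) : y^(-3:ℤ) = (y^3)⁻¹ := by
  rw [zpow_neg, show (3:ℤ) = ((3:ℕ):ℤ) by norm_num, zpow_natCast]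

lemma my_ibp (u : ℝ → ℝ) (hu : ContDiff ℝ 2 u) (x₀ c a b : ℝ) (hab : (0:ℝ) ∉ [[a,b]]) :
    ∫ y in a..b, deriv u (x₀+y) / y^2
      = (u (x₀+b) - c)/b^2 - (u (x₀+a) - c)/a^2 + ∫ y in a..b, 2*(u (x₀+y) - c)/y^3 := by
  have hud : Differentiable ℝ u := hu.differentiable (by norm_num)
  have hv_cont : Continuous (deriv u) := hu.continuous_deriv (by norm_num)
  have hU : ∀ y ∈ [[a,b]], HasDerivAt (fun y : ℝ => y^(-2:ℤ)) ((-2:ℝ) * y^(-3:ℤ)) y := by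
    intro y hy
    have hy0 : y ≠ 0 := fun h => hab (h ▸ hy)
    refine (hasDerivAt_zpow (-2) y (Or.inl hy0)).congr_deriv ?_
    push_cast
    norm_num
  have hV : ∀ y ∈ [[a,b]], HasDerivAt (fun y : ℝ => u (x₀+y) - c) (deriv u (x₀+y)) y := by
    intro y hy
    have h1 : HasDerivAt u (deriv u (x₀+y)) (x₀+y) := (hud (x₀+y)).hasDerivAt
    have h2 : HasDerivAt (fun y : ℝ => x₀ + y) 1 y := (hasDerivAt_id y).const_add x₀
    simpa using (h1.comp y h2).sub_const c
  have hne : ∀ y ∈ [[a,b]], y ≠ 0 := fun y hy h => hab (h ▸ hy)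
  have hU'int : IntervalIntegrable (fun y : ℝ => (-2:ℝ) * y^(-3:ℤ)) volume a b := by
    apply ContinuousOn.intervalIntegrable
    exact continuousOn_const.mul (continuousOn_id.zpow₀ _ (fun y hy => Or.inl (hne y hy)))
  have hV'int : IntervalIntegrable (fun y : ℝ => deriv u (x₀+y)) volume a b :=
    (hv_cont.comp (continuous_const.add continuous_id)).intervalIntegrable a b
  have key := intervalIntegral.integral_mul_deriv_eq_deriv_mul hU hV hU'int hV'int
  have e1 : ∀ y : ℝ, (y:ℝ)^(-2:ℤ) * deriv u (x₀+y) = deriv u (x₀+y) / y^2 := by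
    intro y
    rw [my_zpow2, div_eq_mul_inv, mul_comm]
  have e2 : ∀ y : ℝ, ((-2:ℝ) * y^(-3:ℤ)) * (u (x₀+y) - c) = -(2*(u (x₀+y) - c)/y^3) := by
    intro y
    rw [my_zpow3]
    ring
  simp only [e1] at key
  rw [key]
  simp only [e2, intervalIntegral.integral_neg]
  rw [my_zpow2 b, my_zpow2 a]
  ring

lemma my_bound_pos (u : ℝ → ℝ) (hu : ContDiff ℝ 2 u) (x₀ c V r M : ℝ) (hr : 0 < r)
    (hV : 0 < V) (hw : ∀ x, |u x - c| ≤ V/2) :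
    M/(2*r) - V/r^2 ≤ ∫ y in r..(2*r), (M - deriv u (x₀+y))/y^2 := by
  have h2r : r < 2*r := by linarith
  have hab : (0:ℝ) ∉ [[r, 2*r]] := by
    rw [Set.uIcc_of_le h2r.le]
    intro h
    exact absurd h.1 (by linarith)
  have hne : ∀ y ∈ [[r, 2*r]], y ≠ 0 := fun y hy h => hab (h ▸ hy)
  have hv_cont : Continuous (deriv u) := hu.continuous_deriv (by norm_num)
  have hi1 : IntervalIntegrable (fun y : ℝ => M * y^(-2:ℤ)) volume r (2*r) :=
    (continuousOn_const.mul (continuousOn_id.zpow₀ _ (fun y hy => Or.inl (hne y hy)))).intervalIntegrable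
  have hi2 : IntervalIntegrable (fun y : ℝ => deriv u (x₀+y) / y^2) volume r (2*r) := by
    apply ContinuousOn.intervalIntegrable
    exact ((hv_cont.comp (continuous_const.add continuous_id)).continuousOn).div
      ((continuous_pow 2).continuousOn) (fun y hy => pow_ne_zero 2 (hne y hy))
  have hsplit : ∫ y in r..(2*r), (M - deriv u (x₀+y))/y^2
      = (∫ y in r..(2*r), M * y^(-2:ℤ)) - ∫ y in r..(2*r), deriv u (x₀+y)/y^2 := by
    rw [← intervalIntegral.integral_sub hi1 hi2]
    apply intervalIntegral.integral_congr
    intro y hy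
    show (M - deriv u (x₀+y))/y^2 = M * y^(-2:ℤ) - deriv u (x₀+y)/y^2
    rw [my_zpow2]
    ring
  have hzpow : ∫ y in r..(2*r), (y:ℝ)^(-2:ℤ) = ((2*r)^(-1:ℤ) - r^(-1:ℤ)) / ((-1:ℤ):ℝ) := by
    rw [integral_zpow (Or.inr ⟨by norm_num, hab⟩)]
    norm_num
  have hMint : ∫ y in r..(2*r), M * y^(-2:ℤ) = M * (2*r)⁻¹ := by
    rw [intervalIntegral.integral_const_mul, hzpow, zpow_neg_one, zpow_neg_one]
    have : ((-1:ℤ):ℝ) = -1 := by norm_num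
    rw [this]
    have h2rne : (2*r) ≠ 0 := by positivity
    have hrne : r ≠ 0 := ne_of_gt hr
    field_simp
    ring
  have hibp := my_ibp u hu x₀ c r (2*r) hab
  have hJint : IntervalIntegrable (fun y : ℝ => 2*(u (x₀+y) - c)/y^3) volume r (2*r) := by
    apply ContinuousOn.intervalIntegrable
    exact (continuousOn_const.mul ((((hu.continuous.comp (continuous_const.add continuous_id)).continuousOn)).sub continuousOn_const)).div
      ((continuous_pow 3).continuousOn) (fun y hy => pow_ne_zero 3 (hne y hy))
  have hVint : IntervalIntegrable (fun y : ℝ => V * y^(-3:ℤ)) volume r (2*r) :=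
    (continuousOn_const.mul (continuousOn_id.zpow₀ _ (fun y hy => Or.inl (hne y hy)))).intervalIntegrable
  have hJbound : |∫ y in r..(2*r), 2*(u (x₀+y) - c)/y^3| ≤ |∫ y in r..(2*r), V * y^(-3:ℤ)| := by
    rw [← Real.norm_eq_abs]
    apply intervalIntegral.norm_integral_le_abs_of_norm_le _ hVint
    apply (MeasureTheory.ae_restrict_mem measurableSet_uIoc).mono
    intro y hy
    rw [Set.uIoc_of_le h2r.le] at hy
    have hy0 : 0 < y := lt_trans hr hy.1
    rw [Real.norm_eq_abs, abs_div, abs_mul, my_zpow3, abs_of_pos (pow_pos hy0 3)]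
    rw [div_eq_mul_inv]
    apply mul_le_mul_of_nonneg_right _ (inv_nonneg.2 (pow_pos hy0 3).le)
    have := hw (x₀ + y)
    rw [abs_of_pos (by norm_num : (0:ℝ) < 2)]
    linarith
  have hVval : ∫ y in r..(2*r), V * y^(-3:ℤ) = V/2 * (r^2)⁻¹ - V/2 * ((2*r)^2)⁻¹ := by
    rw [intervalIntegral.integral_const_mul, integral_zpow (Or.inr ⟨by norm_num, hab⟩)]
    have : ((-3:ℤ) + 1) = (-2:ℤ) := by norm_num
    rw [this, my_zpow2, my_zpow2]
    push_cast
    ring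
  have hVnn : (0:ℝ) ≤ V/2 * (r^2)⁻¹ - V/2 * ((2*r)^2)⁻¹ := by
    have h1 : ((2*r)^2)⁻¹ ≤ (r^2)⁻¹ := by
      apply inv_anti₀ (pow_pos hr 2)
      nlinarith
    nlinarith
  rw [hsplit, hibp, hMint]
  rw [hVval, abs_of_nonneg hVnn] at hJbound
  have h1 := abs_le.1 (hw (x₀ + 2*r))
  have h2 := abs_le.1 (hw (x₀ + r))
  have h3 := (abs_le.1 hJbound).2
  have hr2 : (0:ℝ) < r^2 := pow_pos hr 2
  have hA : (u (x₀+2*r) - c)/(2*r)^2 ≤ (V/2)/(2*r)^2 := by gcongr ?_ / _; exact h1.2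
  have hB : -((u (x₀+r) - c)/r^2) ≤ (V/2)/r^2 := by
    rw [← neg_div]
    gcongr ?_ / _
    linarith [h2.1]
  have q0 : M/(2*r) = M * (2*r)⁻¹ := div_eq_mul_inv _ _
  have q1 : (V/2)/((2*r)^2) = V/2 * ((2*r)^2)⁻¹ := div_eq_mul_inv _ _
  have q2 : (V/2)/r^2 = V/2 * (r^2)⁻¹ := div_eq_mul_inv _ _
  have q3 : V/r^2 = V/2 * (r^2)⁻¹ + V/2 * (r^2)⁻¹ := by
    rw [div_eq_mul_inv]
    ring
  linarith

lemma my_bound_neg (u : ℝ → ℝ) (hu : ContDiff ℝ 2 u) (x₀ c V r M : ℝ) (hr : 0 < r)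
    (hV : 0 < V) (hw : ∀ x, |u x - c| ≤ V/2) :
    M/(2*r) - V/r^2 ≤ ∫ y in (-(2*r))..(-r), (M - deriv u (x₀+y))/y^2 := by
  have h2r : -(2*r) < -r := by linarith
  have hab : (0:ℝ) ∉ [[-(2*r), -r]] := by
    rw [Set.uIcc_of_le h2r.le]
    intro h
    exact absurd h.2 (by simp; linarith)
  have hne : ∀ y ∈ [[-(2*r), -r]], y ≠ 0 := fun y hy h => hab (h ▸ hy)
  have hv_cont : Continuous (deriv u) := hu.continuous_deriv (by norm_num)
  have hi1 : IntervalIntegrable (fun y : ℝ => M * y^(-2:ℤ)) volume (-(2*r)) (-r) :=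
    (continuousOn_const.mul (continuousOn_id.zpow₀ _ (fun y hy => Or.inl (hne y hy)))).intervalIntegrable
  have hi2 : IntervalIntegrable (fun y : ℝ => deriv u (x₀+y) / y^2) volume (-(2*r)) (-r) := by
    apply ContinuousOn.intervalIntegrable
    exact ((hv_cont.comp (continuous_const.add continuous_id)).continuousOn).div
      ((continuous_pow 2).continuousOn) (fun y hy => pow_ne_zero 2 (hne y hy))
  have hsplit : ∫ y in (-(2*r))..(-r), (M - deriv u (x₀+y))/y^2
      = (∫ y in (-(2*r))..(-r), M * y^(-2:ℤ)) - ∫ y in (-(2*r))..(-r), deriv u (x₀+y)/y^2 := by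
    rw [← intervalIntegral.integral_sub hi1 hi2]
    apply intervalIntegral.integral_congr
    intro y hy
    show (M - deriv u (x₀+y))/y^2 = M * y^(-2:ℤ) - deriv u (x₀+y)/y^2
    rw [my_zpow2]
    ring
  have hzpow : ∫ y in (-(2*r))..(-r), (y:ℝ)^(-2:ℤ) = ((-r)^(-1:ℤ) - (-(2*r))^(-1:ℤ)) / ((-1:ℤ):ℝ) := by
    rw [integral_zpow (Or.inr ⟨by norm_num, hab⟩)]
    norm_num
  have hMint : ∫ y in (-(2*r))..(-r), M * y^(-2:ℤ) = M * (2*r)⁻¹ := by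
    rw [intervalIntegral.integral_const_mul, hzpow, zpow_neg_one, zpow_neg_one]
    have : ((-1:ℤ):ℝ) = -1 := by norm_num
    rw [this]
    have hrne : r ≠ 0 := ne_of_gt hr
    field_simp
    ring
  have hibp := my_ibp u hu x₀ c (-(2*r)) (-r) hab
  have hVint : IntervalIntegrable (fun y : ℝ => V * (-y)^(-3:ℤ)) volume (-(2*r)) (-r) := by
    apply ContinuousOn.intervalIntegrable
    exact continuousOn_const.mul ((continuousOn_id.neg).zpow₀ _
      (fun y hy => Or.inl (neg_ne_zero.2 (hne y hy))))
  have hJbound : |∫ y in (-(2*r))..(-r), 2*(u (x₀+y) - c)/y^3|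
      ≤ |∫ y in (-(2*r))..(-r), V * (-y)^(-3:ℤ)| := by
    rw [← Real.norm_eq_abs]
    apply intervalIntegral.norm_integral_le_abs_of_norm_le _ hVint
    apply (MeasureTheory.ae_restrict_mem measurableSet_uIoc).mono
    intro y hy
    rw [Set.uIoc_of_le h2r.le] at hy
    have hy0 : y < 0 := lt_of_le_of_lt hy.2 (by linarith)
    have hny : 0 < -y := by linarith
    rw [Real.norm_eq_abs, abs_div, abs_mul, my_zpow3]
    have he : |y^3| = (-y)^3 := by
      rw [abs_of_neg (Odd.pow_neg (by decide) hy0)]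
      ring
    rw [he, div_eq_mul_inv]
    apply mul_le_mul_of_nonneg_right _ (inv_nonneg.2 (pow_pos hny 3).le)
    have := hw (x₀ + y)
    rw [abs_of_pos (by norm_num : (0:ℝ) < 2)]
    linarith
  have hVneg : ∫ y in (-(2*r))..(-r), V * (-y)^(-3:ℤ) = ∫ y in r..(2*r), V * y^(-3:ℤ) := by
    have := intervalIntegral.integral_comp_neg (a := -(2*r)) (b := -r) (fun t : ℝ => V * t^(-3:ℤ))
    simpa using this
  have hab' : (0:ℝ) ∉ [[r, 2*r]] := by
    rw [Set.uIcc_of_le (by linarith : r ≤ 2*r)]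
    intro h
    exact absurd h.1 (by linarith)
  have hVval : ∫ y in r..(2*r), V * y^(-3:ℤ) = V/2 * (r^2)⁻¹ - V/2 * ((2*r)^2)⁻¹ := by
    rw [intervalIntegral.integral_const_mul, integral_zpow (Or.inr ⟨by norm_num, hab'⟩)]
    have : ((-3:ℤ) + 1) = (-2:ℤ) := by norm_num
    rw [this, my_zpow2, my_zpow2]
    push_cast
    ring
  have hVnn : (0:ℝ) ≤ V/2 * (r^2)⁻¹ - V/2 * ((2*r)^2)⁻¹ := by
    have h1 : ((2*r)^2)⁻¹ ≤ (r^2)⁻¹ := by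
      apply inv_anti₀ (pow_pos hr 2)
      nlinarith
    nlinarith
  rw [hsplit, hibp, hMint]
  rw [hVneg, hVval, abs_of_nonneg hVnn] at hJbound
  have h1 := abs_le.1 (hw (x₀ + -r))
  have h2 := abs_le.1 (hw (x₀ + -(2*r)))
  have h3 := (abs_le.1 hJbound).2
  have hr2 : (0:ℝ) < r^2 := pow_pos hr 2
  have e1 : ((-r):ℝ)^2 = r^2 := by ring
  have e2 : ((-(2*r)):ℝ)^2 = (2*r)^2 := by ring
  rw [e1, e2]
  have hA : (u (x₀ + -r) - c)/r^2 ≤ (V/2)/r^2 := by gcongr ?_ / _; exact h1.2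
  have hB : -((u (x₀ + -(2*r)) - c)/(2*r)^2) ≤ (V/2)/(2*r)^2 := by
    rw [← neg_div]
    gcongr ?_ / _
    linarith [h2.1]
  have q0 : M/(2*r) = M * (2*r)⁻¹ := div_eq_mul_inv _ _
  have q1 : (V/2)/((2*r)^2) = V/2 * ((2*r)^2)⁻¹ := div_eq_mul_inv _ _
  have q2 : (V/2)/r^2 = V/2 * (r^2)⁻¹ := div_eq_mul_inv _ _
  have q3 : V/r^2 = V/2 * (r^2)⁻¹ + V/2 * (r^2)⁻¹ := by
    rw [div_eq_mul_inv]
    ring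
  linarith

/-- Enhanced nonlinear maximum principle, part 1: if `u` is `2π`-periodic with
amplitude `V = max u − min u > 0`, `v = u'`, and `x₀` is a maximum point of `v`,
then `8πV·Λv(x₀) ≥ v(x₀)²`. -/
theorem enhanced_max_principle_sq (u : ℝ → ℝ) (Mx mn V x₀ L : ℝ)
    (hu : ContDiff ℝ 2 u) (hper : Function.Periodic u (2*π))
    (hMx : IsGreatest (Set.range u) Mx) (hmn : IsLeast (Set.range u) mn)
    (hV : V = Mx - mn) (hVpos : 0 < V)
    (hmax : ∀ x : ℝ, deriv u x ≤ deriv u x₀)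
    (hL : Filter.Tendsto (fun ε : ℝ =>
        (1/π) * ∫ y in {y : ℝ | ε ≤ |y|}, (deriv u x₀ - deriv u (x₀ + y)) / y^2)
        (𝓝[>] 0) (𝓝 L)) :
    (deriv u x₀)^2 ≤ 8*π*V*L := by
  have hπ : 0 < π := Real.pi_pos
  have hud : Differentiable ℝ u := hu.differentiable (by norm_num)
  have hv_cont : Continuous (deriv u) := hu.continuous_deriv (by norm_num)
  set M := deriv u x₀ with hMdef
  set c := (Mx + mn)/2 with hc
  set f := fun y : ℝ => (M - deriv u (x₀ + y)) / y^2 with hf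
  have hw : ∀ x, |u x - c| ≤ V/2 := by
    intro x
    have h1 : u x ≤ Mx := hMx.2 (Set.mem_range_self x)
    have h2 : mn ≤ u x := hmn.2 (Set.mem_range_self x)
    rw [abs_le, hc, hV]
    constructor <;> linarith
  have hvper : Function.Periodic (deriv u) (2*π) := by
    intro x
    have h1 : (fun y => u (y + 2*π)) = u := funext hper
    calc deriv u (x + 2*π) = deriv (fun y => u (y + 2*π)) x :=
          (deriv_comp_add_const u (2*π) x).symm
      _ = deriv u x := by rw [h1]
  obtain ⟨C, hC⟩ := (isCompact_Icc : IsCompact (Icc (0:ℝ) (2*π))).exists_bound_of_continuousOn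
    hv_cont.continuousOn
  have hvC : ∀ x, |deriv u x| ≤ C := by
    intro x
    obtain ⟨y, hy, hxy⟩ := hvper.exists_mem_Ico₀ (by positivity) x
    rw [hxy, ← Real.norm_eq_abs]
    exact hC y (Set.Ico_subset_Icc_self hy)
  have hf0 : ∀ y, 0 ≤ f y := fun y => div_nonneg (by linarith [hmax (x₀+y)]) (sq_nonneg y)
  have hfm : Measurable f :=
    (measurable_const.sub ((hv_cont.comp (continuous_const.add continuous_id)).measurable)).div
      ((continuous_pow 2).measurable)
  have hmeas : ∀ ε : ℝ, MeasurableSet {y : ℝ | ε ≤ |y|} := fun ε =>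
    (isClosed_le continuous_const continuous_abs).measurableSet
  have hM0 : 0 ≤ M := by
    obtain ⟨z, _, hz0⟩ := exists_deriv_eq_zero (f := u) (a := 0) (b := 2*π) (by positivity)
      hud.continuous.continuousOn (by rw [← hper 0]; norm_num)
    calc (0:ℝ) = deriv u z := hz0.symm
      _ ≤ M := hmax z
  have hL0 : 0 ≤ L := by
    apply ge_of_tendsto' hL
    intro ε
    exact mul_nonneg (by positivity) (setIntegral_nonneg (hmeas ε) (fun y _ => hf0 y))
  rcases eq_or_lt_of_le hM0 with hM0' | hMpos
  · calc M^2 = 0 := by rw [← hM0']; ring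
      _ ≤ 8*π*V*L := mul_nonneg (by positivity) hL0
  · set r := 4*V/M with hrdef
    have hr : 0 < r := by positivity
    -- integrability of the bounding function
    have hKey : ∀ ε : ℝ, 0 < ε → ε ≤ r → M^2/(8*V) ≤ ∫ y in {y : ℝ | ε ≤ |y|}, f y := by
      intro ε hε hεr
      have hg : IntegrableOn (fun y : ℝ => (2*C) * y^(-2:ℝ)) (Ioi ε) :=
        (integrableOn_Ioi_rpow_of_lt (by norm_num) hε).const_mul _
      have hbound : ∀ x : ℝ, |M - deriv u (x₀ + x)| ≤ 2*C := by
        intro x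
        have h1 := hvC (x₀ + x)
        have h2 := hvC x₀
        have h3 : |M - deriv u (x₀+x)| ≤ |M| + |deriv u (x₀+x)| := by
          rw [sub_eq_add_neg]
          exact (abs_add_le _ _).trans (by rw [abs_neg])
        rw [← hMdef] at h2
        linarith
      have hIci : IntegrableOn f (Ici ε) := by
        rw [integrableOn_Ici_iff_integrableOn_Ioi]
        apply Integrable.mono' hg hfm.aestronglyMeasurable.restrict
        apply (ae_restrict_mem measurableSet_Ioi).mono
        intro y hy
        have hy0 : 0 < y := lt_trans hε hy
        have hrp : y^(-2:ℝ) = (y^2)⁻¹ := by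
          rw [Real.rpow_neg hy0.le, Real.rpow_two, sq]
        rw [Real.norm_eq_abs, hf]
        rw [abs_div, abs_of_pos (pow_pos hy0 2), hrp, div_eq_mul_inv]
        exact mul_le_mul_of_nonneg_right (hbound y) (inv_nonneg.2 (pow_pos hy0 2).le)
      have hIic : IntegrableOn f (Iic (-ε)) := by
        rw [← (Measure.measurePreserving_neg (volume : Measure ℝ)).integrableOn_comp_preimage
          (Homeomorph.neg ℝ).measurableEmbedding]
        simp only [Function.comp_def, neg_preimage, neg_Iic, neg_neg]
        rw [integrableOn_Ici_iff_integrableOn_Ioi]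
        apply Integrable.mono' hg (hfm.comp measurable_neg).aestronglyMeasurable.restrict
        apply (ae_restrict_mem measurableSet_Ioi).mono
        intro y hy
        have hy0 : 0 < y := lt_trans hε hy
        have hrp : y^(-2:ℝ) = (y^2)⁻¹ := by
          rw [Real.rpow_neg hy0.le, Real.rpow_two, sq]
        simp only [Function.comp_apply, Real.norm_eq_abs, hf]
        rw [neg_sq, abs_div, abs_of_pos (pow_pos hy0 2), hrp, div_eq_mul_inv]
        exact mul_le_mul_of_nonneg_right (hbound (-y)) (inv_nonneg.2 (pow_pos hy0 2).le)
      have hSet : {y : ℝ | ε ≤ |y|} = Iic (-ε) ∪ Ici ε := by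
        ext y
        simp only [Set.mem_setOf_eq, Set.mem_union, Set.mem_Iic, Set.mem_Ici, le_abs, le_neg]
        tauto
      have hint : IntegrableOn f {y : ℝ | ε ≤ |y|} := by
        rw [hSet]; exact hIic.union hIci
      have hsub : (Icc (-(2*r)) (-r) ∪ Icc r (2*r)) ⊆ {y : ℝ | ε ≤ |y|} := by
        rintro y (hy | hy) <;> rw [Set.mem_Icc] at hy
        · show ε ≤ |y|
          rw [abs_of_neg (by linarith [hy.2] : y < 0)]
          linarith [hy.2]
        · show ε ≤ |y|
          rw [abs_of_pos (by linarith [hy.1] : 0 < y)]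
          linarith [hy.1]
      have hmono : ∫ y in (Icc (-(2*r)) (-r) ∪ Icc r (2*r)), f y
          ≤ ∫ y in {y : ℝ | ε ≤ |y|}, f y :=
        setIntegral_mono_set hint (Eventually.of_forall hf0) hsub.eventuallyLE
      have hd : Disjoint (Icc (-(2*r)) (-r)) (Icc r (2*r)) := by
        rw [Set.disjoint_left]
        intro y h1 h2
        have := h1.2
        have := h2.1
        linarith
      have hInt1 : IntegrableOn f (Icc (-(2*r)) (-r)) :=
        hint.mono_set (fun y hy => hsub (Or.inl hy))
      have hInt2 : IntegrableOn f (Icc r (2*r)) :=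
        hint.mono_set (fun y hy => hsub (Or.inr hy))
      rw [MeasureTheory.setIntegral_union hd measurableSet_Icc hInt1 hInt2] at hmono
      have c1 : ∫ y in Icc (-(2*r)) (-r), f y = ∫ y in (-(2*r))..(-r), f y := by
        rw [intervalIntegral.integral_of_le (by linarith), ← integral_Icc_eq_integral_Ioc]
      have c2 : ∫ y in Icc r (2*r), f y = ∫ y in r..(2*r), f y := by
        rw [intervalIntegral.integral_of_le (by linarith), ← integral_Icc_eq_integral_Ioc]
      have hb1 := my_bound_neg u hu x₀ c V r M hr hVpos hw
      have hb2 := my_bound_pos u hu x₀ c V r M hr hVpos hw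
      have harith : M^2/(8*V) = (M/(2*r) - V/r^2) + (M/(2*r) - V/r^2) := by
        rw [hrdef]
        field_simp
        ring
      calc M^2/(8*V) = (M/(2*r) - V/r^2) + (M/(2*r) - V/r^2) := harith
        _ ≤ (∫ y in (-(2*r))..(-r), f y) + ∫ y in r..(2*r), f y := add_le_add hb1 hb2
        _ = (∫ y in Icc (-(2*r)) (-r), f y) + ∫ y in Icc r (2*r), f y := by rw [c1, c2]
        _ ≤ ∫ y in {y : ℝ | ε ≤ |y|}, f y := hmono
    have hLbound : M^2/(8*V) * (1/π) ≤ L := by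
      apply ge_of_tendsto hL
      filter_upwards [Ioc_mem_nhdsGT_of_mem (Set.mem_Ico.2 ⟨le_refl 0, hr⟩)] with ε hε
      have := hKey ε hε.1 hε.2
      rw [mul_comm]
      exact mul_le_mul_of_nonneg_left this (by positivity)
    have hVne : V ≠ 0 := ne_of_gt hVpos
    have hπne : π ≠ 0 := ne_of_gt hπ
    have : M^2 = 8*π*V*(M^2/(8*V)*(1/π)) := by field_simp
    rw [this]
    apply mul_le_mul_of_nonneg_left hLbound (by positivity)
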